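/- Let the group Z² act on X = {(2^n, 2^m) : n,m ∈ Z} ⊆ R² by (k,l)·(2^n,2^m) = (2^{n+k}, 2^{m+l}), with the restricted Euclidean metric on X. Define Δ_Γ(x,x') = min(d(x,x'), inf{|γ| : γx = x'}). Then Δ_Γ is not coarsely equivalent to the warped metric d_Γ: specifically, for x_n = (2^n, 2^{−n}) and x_n' = (2^{n+1}, 1), we have d_Γ(x_n, x_n') ≤ 2 for all n ≥ 1 while Δ_Γ(x_n, x_n') tends to infinity. -/

import Mathlib

open scoped BigOperators
open Filter

/-- Word length in `ℤ²` with respect to the standard (symmetrised) generators. -/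
noncomputable def zzWordLength (g : ℤ × ℤ) : ℕ :=
  sInf {n : ℕ | ∃ f : Fin n → ℤ × ℤ,
    (∀ i, f i ∈ ({(1, 0), (0, 1), (-1, 0), (0, -1)} : Set (ℤ × ℤ))) ∧ ∑ i, f i = g}

/-- The embedding `(n,m) ↦ (2ⁿ, 2ᵐ) ∈ ℝ²` and the induced Euclidean metric. -/
noncomputable def zzDist (p q : ℤ × ℤ) : ℝ :=
  Real.sqrt (((2 : ℝ) ^ p.1 - (2 : ℝ) ^ q.1) ^ 2 + ((2 : ℝ) ^ p.2 - (2 : ℝ) ^ q.2) ^ 2)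

/-- Chain sums defining the warped metric for the translation action of `ℤ²`. -/
def zzChainSums (x x' : ℤ × ℤ) : Set ℝ :=
  {c | ∃ (N : ℕ) (xs : Fin (N + 1) → ℤ × ℤ) (γs : Fin N → ℤ × ℤ),
    xs 0 = x ∧ xs (Fin.last N) = x' ∧
    c = ∑ i : Fin N, ((zzWordLength (γs i) : ℝ) + zzDist (γs i + xs i.castSucc) (xs i.succ))}

noncomputable def zzWarpDist (x x' : ℤ × ℤ) : ℝ := sInf (zzChainSums x x')

/-- `Δ_Γ(x,x') = min(d(x,x'), inf{|γ| : γ·x = x'})`. -/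
noncomputable def zzDelta (x x' : ℤ × ℤ) : ℝ :=
  min (zzDist x x') (sInf {c : ℝ | ∃ γ : ℤ × ℤ, γ + x = x' ∧ c = (zzWordLength γ : ℝ)})

lemma zzWordLength_le {n : ℕ} (g : ℤ × ℤ) (f : Fin n → ℤ × ℤ)
    (h1 : ∀ i, f i ∈ ({(1, 0), (0, 1), (-1, 0), (0, -1)} : Set (ℤ × ℤ)))
    (h2 : ∑ i, f i = g) : zzWordLength g ≤ n :=
  Nat.sInf_le ⟨f, h1, h2⟩

lemma zzWordLength_zero : zzWordLength (0, 0) = 0 :=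
  Nat.le_zero.mp (zzWordLength_le _ (fun i : Fin 0 => i.elim0) (fun i => i.elim0) (by simp; rfl))

lemma zzWordLength_e1 : zzWordLength (1, 0) ≤ 1 :=
  zzWordLength_le _ ![(1,0)] (by intro i; fin_cases i; simp) (by simp)

lemma sum_gen_bound {k : ℕ} (f : Fin k → ℤ × ℤ)
    (h1 : ∀ i, f i ∈ ({(1,0),(0,1),(-1,0),(0,-1)} : Set (ℤ × ℤ))) :
    |(∑ i, f i).1| + |(∑ i, f i).2| ≤ (k : ℤ) := by
  calc |(∑ i, f i).1| + |(∑ i, f i).2|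
      = |∑ i, (f i).1| + |∑ i, (f i).2| := by rw [Prod.fst_sum, Prod.snd_sum]
    _ ≤ (∑ i, |(f i).1|) + ∑ i, |(f i).2| :=
        add_le_add (Finset.abs_sum_le_sum_abs _ _) (Finset.abs_sum_le_sum_abs _ _)
    _ = ∑ i, (|(f i).1| + |(f i).2|) := Finset.sum_add_distrib.symm
    _ = ∑ _i : Fin k, (1:ℤ) := by
        refine Finset.sum_congr rfl fun i _ => ?_
        have h := h1 i
        simp only [Set.mem_insert_iff, Set.mem_singleton_iff] at h
        rcases h with h|h|h|h <;> simp [h]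
    _ = k := by simp

lemma count_ge (n k : ℕ) (f : Fin k → ℤ × ℤ)
    (h1 : ∀ i, f i ∈ ({(1,0),(0,1),(-1,0),(0,-1)} : Set (ℤ × ℤ)))
    (h2 : ∑ i, f i = ((1:ℤ), (n:ℤ))) : n + 1 ≤ k := by
  have hb := sum_gen_bound f h1
  rw [h2] at hb
  have e1 : |((1:ℤ),(n:ℤ)).1| = 1 := by simp
  have e2 : |((1:ℤ),(n:ℤ)).2| = (n:ℤ) := by simp
  rw [e1, e2] at hb
  omega

lemma zzWordLength_ge_one_n (n : ℕ) : n + 1 ≤ zzWordLength ((1 : ℤ), (n : ℤ)) := by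
  have hne : {k : ℕ | ∃ f : Fin k → ℤ × ℤ,
      (∀ i, f i ∈ ({(1, 0), (0, 1), (-1, 0), (0, -1)} : Set (ℤ × ℤ))) ∧
      ∑ i, f i = ((1 : ℤ), (n : ℤ))}.Nonempty := by
    refine ⟨n + 1, Fin.cons (1,0) (fun _ : Fin n => ((0:ℤ),(1:ℤ))), ?_, ?_⟩
    · intro i
      refine Fin.cases ?_ (fun j => ?_) i <;> simp
    · rw [Fin.sum_cons]
      simp [Prod.ext_iff]
  obtain ⟨f, h1, h2⟩ := Nat.sInf_mem hne
  exact count_ge n _ f h1 h2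


lemma warp_le (n : ℕ) : zzWarpDist ((n : ℤ), -(n : ℤ)) ((n : ℤ) + 1, 0) ≤ 2 := by
  have hbdd : BddBelow (zzChainSums ((n:ℤ), -(n:ℤ)) ((n:ℤ)+1, 0)) := by
    refine ⟨0, fun c hc => ?_⟩
    obtain ⟨N, xs, γs, -, -, rfl⟩ := hc
    exact Finset.sum_nonneg fun i _ =>
      add_nonneg (Nat.cast_nonneg _) (Real.sqrt_nonneg _)
  set xs : Fin 3 → ℤ × ℤ := ![((n:ℤ),-(n:ℤ)), ((n:ℤ),0), ((n:ℤ)+1,0)] with hxs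
  set γs : Fin 2 → ℤ × ℤ := ![((0:ℤ),(0:ℤ)), ((1:ℤ),(0:ℤ))] with hγs
  have hmem : (∑ i : Fin 2,
      ((zzWordLength (γs i) : ℝ) + zzDist (γs i + xs i.castSucc) (xs i.succ)))
      ∈ zzChainSums ((n:ℤ), -(n:ℤ)) ((n:ℤ)+1, 0) :=
    ⟨2, xs, γs, by simp [hxs], by simp [hxs, Fin.last], rfl⟩
  refine le_trans (csInf_le hbdd hmem) ?_
  rw [Fin.sum_univ_two]
  have e0 : γs 0 = ((0:ℤ),(0:ℤ)) := rfl
  have e1 : γs 1 = ((1:ℤ),(0:ℤ)) := rfl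
  have x0 : xs (0 : Fin 2).castSucc = ((n:ℤ),-(n:ℤ)) := rfl
  have x1 : xs (0 : Fin 2).succ = ((n:ℤ),(0:ℤ)) := rfl
  have x2 : xs (1 : Fin 2).castSucc = ((n:ℤ),(0:ℤ)) := rfl
  have x3 : xs (1 : Fin 2).succ = ((n:ℤ)+1,(0:ℤ)) := rfl
  rw [e0, e1, x0, x1, x2, x3, zzWordLength_zero]
  have d1 : zzDist (((0:ℤ),(0:ℤ)) + ((n:ℤ),-(n:ℤ))) ((n:ℤ),(0:ℤ)) ≤ 1 := by
    have hp : ((0:ℤ),(0:ℤ)) + ((n:ℤ),-(n:ℤ)) = ((n:ℤ),-(n:ℤ)) := by simp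
    rw [hp, zzDist]
    have h0 : ((2:ℝ)^((n:ℤ)) - 2^((n:ℤ)))^2 = 0 := by ring
    rw [h0, zero_add, Real.sqrt_sq_eq_abs]
    have hpos : (0:ℝ) < 2 ^ (-(n:ℤ)) := zpow_pos (by norm_num) _
    have hle : (2:ℝ) ^ (-(n:ℤ)) ≤ 1 := by
      apply zpow_le_one_of_nonpos₀ (by norm_num)
      omega
    have : ((2:ℝ)^((0:ℤ))) = 1 := by norm_num
    rw [this]
    rw [abs_le]
    constructor <;> linarith
  have d2 : zzDist (((1:ℤ),(0:ℤ)) + ((n:ℤ),(0:ℤ))) ((n:ℤ)+1,(0:ℤ)) = 0 := by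
    have hp : ((1:ℤ),(0:ℤ)) + ((n:ℤ),(0:ℤ)) = ((n:ℤ)+1,(0:ℤ)) := by
      simp [Prod.ext_iff]; ring
    rw [hp, zzDist]
    simp
  rw [d2]
  have : (zzWordLength ((1:ℤ),(0:ℤ)) : ℝ) ≤ 1 := by exact_mod_cast zzWordLength_e1
  push_cast
  linarith

lemma delta_ge (n : ℕ) : (n : ℝ) ≤ zzDelta ((n:ℤ), -(n:ℤ)) ((n:ℤ)+1, 0) := by
  refine le_min ?_ ?_
  · have hn2 : (n : ℝ) ≤ (2:ℝ) ^ (n:ℤ) := by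
      rw [zpow_natCast]
      exact_mod_cast (Nat.lt_two_pow_self (n := n)).le
    rw [zzDist]
    have h1 : ((2:ℝ)^(n:ℤ) - 2^((n:ℤ)+1))^2 = ((2:ℝ)^(n:ℤ))^2 := by
      rw [zpow_add_one₀ (by norm_num : (2:ℝ) ≠ 0)]
      ring
    calc (n:ℝ) ≤ (2:ℝ)^(n:ℤ) := hn2
      _ = Real.sqrt (((2:ℝ)^(n:ℤ) - 2^((n:ℤ)+1))^2) := by
          rw [h1, Real.sqrt_sq (by positivity)]
      _ ≤ _ := Real.sqrt_le_sqrt (le_add_of_nonneg_right (sq_nonneg _))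
  · refine le_csInf ⟨(zzWordLength ((1:ℤ),(n:ℤ)) : ℝ), ((1:ℤ),(n:ℤ)), ?_, rfl⟩ ?_
    · simp [Prod.ext_iff]; ring
    · rintro c ⟨γ, hγ, rfl⟩
      have hγ' : γ = ((1:ℤ),(n:ℤ)) := by
        rw [Prod.ext_iff] at hγ ⊢
        simp only [Prod.fst_add, Prod.snd_add] at hγ
        obtain ⟨a, b⟩ := hγ
        constructor <;> simp at a b ⊢ <;> omega
      subst hγ'
      have := zzWordLength_ge_one_n n
      have : (n:ℕ) ≤ zzWordLength ((1:ℤ),(n:ℤ)) := by omega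
      exact_mod_cast this

/-- `Δ_Γ` is not coarsely equivalent to the warped metric: along
`xₙ = (2ⁿ, 2⁻ⁿ)`, `xₙ' = (2ⁿ⁺¹, 1)` the warped distance stays `≤ 2` while `Δ_Γ → ∞`. -/
theorem zz_delta_not_coarsely_equivalent :
    (∀ n : ℕ, 1 ≤ n → zzWarpDist ((n : ℤ), -(n : ℤ)) ((n : ℤ) + 1, 0) ≤ 2) ∧
    Tendsto (fun n : ℕ => zzDelta ((n : ℤ), -(n : ℤ)) ((n : ℤ) + 1, 0)) atTop atTop := by
  constructor
  · exact fun n _ => warp_le n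
  · exact tendsto_atTop_mono delta_ge tendsto_natCast_atTop_atTop
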